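/- Let H₁, H₂ : [0,∞) → ℝ both satisfy the standing integrability assumptions, with H₁ ≤ H₂ pointwise and H₁(0) = H₂(0). Then q_n^{H₂} ≤ q_n^{H₁} as quadratic forms on ℝ^{n+1} for all n ≥ 0. If moreover both are nonnegative and nonzero in L^1((0,∞)), then t_n^{H₂} ≤ t_n^{H₁} for all n ≥ 0. -/

import Mathlib

open MeasureTheory Set Finset

/-- The real-valued function `ψ_H`. -/
noncomputable def psiH (H : ℝ → ℝ) (s : ℝ) : ℝ :=
  ∫ t in Ioi (0 : ℝ),
    (H 0 * Real.exp (-t) / t - H t * Real.exp (-(s * t)) / (1 - Real.exp (-t)))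

/-- The symmetric bilinear form attached to `q_n^H`. -/
noncomputable def bH (H : ℝ → ℝ) (n : ℕ) (x y : Fin (n + 1) → ℝ) : ℝ :=
  ∑ i, ∑ j, x i * y j * psiH H |(i.1 : ℝ) - (j.1 : ℝ)|

/-- The quadratic form `q_n^H`. -/
noncomputable def qH (H : ℝ → ℝ) (n : ℕ) (x : Fin (n + 1) → ℝ) : ℝ :=
  bH H n x x

lemma my_exp_quad {t : ℝ} (h0 : 0 ≤ t) (h1 : t ≤ 1) :
    |Real.exp (-t) - (1 - t)| ≤ 3/4 * t^2 := by
  have h := Real.exp_bound (x := -t) (by rwa [abs_neg, abs_of_nonneg h0]) (n := 2) (by norm_num)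
  calc |Real.exp (-t) - (1 - t)| = |Real.exp (-t) - ∑ i ∈ Finset.range 2, (-t)^i / i.factorial| := by
        norm_num [Finset.sum_range_succ]; ring_nf
    _ ≤ |(-t)| ^ 2 * ((2:ℕ).succ / ((2:ℕ).factorial * 2)) := h
    _ = 3/4 * t^2 := by rw [abs_neg, abs_of_nonneg h0]; norm_num [Nat.factorial]; ring

lemma my_exp_upper {t : ℝ} (h0 : 0 ≤ t) (h1 : t ≤ 1) : Real.exp (-t) ≤ 1 - t/4 := by
  have h := abs_le.1 (my_exp_quad h0 h1)
  nlinarith [h.1, h.2]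

lemma my_one_sub_exp_lb {t : ℝ} (h0 : 0 < t) (h1 : t ≤ 1) : t/4 ≤ 1 - Real.exp (-t) := by
  have := my_exp_upper h0.le h1; linarith

lemma my_one_sub_exp_lb' {t : ℝ} (h : 1/2 ≤ t) : 1/8 ≤ 1 - Real.exp (-t) := by
  have h2 : Real.exp (-t) ≤ Real.exp (-(1/2:ℝ)) := Real.exp_le_exp.2 (by linarith)
  have := my_exp_upper (t := (1/2:ℝ)) (by norm_num) (by norm_num)
  linarith

lemma my_one_sub_exp_ub (x : ℝ) : 1 - Real.exp (-x) ≤ x := by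
  have := Real.add_one_le_exp (-x); linarith

lemma my_num_bound {t : ℝ} (h0 : 0 ≤ t) (h1 : t ≤ 1/2) :
    |Real.exp (-t) - Real.exp (-t) * Real.exp (-t) - t| ≤ 4 * t^2 := by
  have h1' := abs_le.1 (my_exp_quad h0 (by linarith))
  have h2' := abs_le.1 (my_exp_quad (t := 2*t) (by linarith) (by linarith))
  have he : Real.exp (-(2*t)) = Real.exp (-t) * Real.exp (-t) := by
    rw [← Real.exp_add]; ring_nf
  rw [he] at h2'
  rw [abs_le]
  constructor <;> nlinarith [h1'.1, h1'.2, h2'.1, h2'.2]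

/-- AE strong measurability of the integrand. -/
lemma my_F_aesm (H : ℝ → ℝ) (hInt : IntegrableOn H (Ici 0)) (s : ℝ) {S : Set ℝ}
    (hSsub : S ⊆ Ioi 0) :
    AEStronglyMeasurable
      (fun t => H 0 * Real.exp (-t) / t - H t * Real.exp (-(s*t)) / (1 - Real.exp (-t)))
      (volume.restrict S) := by
  have hH : AEStronglyMeasurable H (volume.restrict S) :=
    hInt.aestronglyMeasurable.mono_measure
      (Measure.restrict_mono (fun x hx => Set.mem_Ici.2 (le_of_lt (hSsub hx))) le_rfl)
  have m1 : Measurable fun t : ℝ => H 0 * Real.exp (-t) / t :=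
    ((measurable_const.mul (Real.measurable_exp.comp measurable_neg)).div measurable_id)
  have m2 : Measurable fun t : ℝ => Real.exp (-(s*t)) / (1 - Real.exp (-t)) :=
    (Real.measurable_exp.comp (measurable_const.mul measurable_id).neg).div
      (measurable_const.sub (Real.measurable_exp.comp measurable_neg))
  exact m1.aestronglyMeasurable.sub
    ((hH.mul m2.aestronglyMeasurable).congr (by filter_upwards with t using by simp [Pi.mul_apply]; ring))

lemma my_pair_id {r : ℝ} (n : ℕ) (i j : Fin (n+1)) :
    r ^ (Nat.dist i.1 j.1) =
      (1 - r^2) * ∑ k ∈ Finset.range (n+1),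
        ((if k ≤ i.1 then r^(i.1-k) else 0) * (if k ≤ j.1 then r^(j.1-k) else 0))
      + r^2 * (r^i.1 * r^j.1) := by
  suffices h : ∀ i j : Fin (n+1), j.1 ≤ i.1 → r ^ (Nat.dist i.1 j.1) =
      (1 - r^2) * ∑ k ∈ Finset.range (n+1),
        ((if k ≤ i.1 then r^(i.1-k) else 0) * (if k ≤ j.1 then r^(j.1-k) else 0))
      + r^2 * (r^i.1 * r^j.1) by
    rcases le_total j.1 i.1 with hle | hle
    · exact h i j hle
    · have := h j i hle
      rw [Nat.dist_comm] at this
      rw [this]; congr 1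
      · congr 1; apply Finset.sum_congr rfl; intro k _; ring
      · ring
  intro i j hji
  have hdist : Nat.dist i.1 j.1 = i.1 - j.1 := Nat.dist_eq_sub_of_le_right hji
  have hsub : Finset.range (j.1+1) ⊆ Finset.range (n+1) :=
    Finset.range_subset_range.2 (by omega)
  have hsum : ∑ k ∈ Finset.range (n+1),
        ((if k ≤ i.1 then r^(i.1-k) else 0) * (if k ≤ j.1 then r^(j.1-k) else 0))
      = ∑ k ∈ Finset.range (j.1+1), r^(i.1-k) * r^(j.1-k) := by
    rw [← Finset.sum_subset hsub]
    · apply Finset.sum_congr rfl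
      intro k hk
      have hk' : k ≤ j.1 := by simp at hk; omega
      rw [if_pos (le_trans hk' hji), if_pos hk']
    · intro k _ hk
      have : ¬ k ≤ j.1 := by simp at hk ⊢; omega
      rw [if_neg this, mul_zero]
  rw [hsum, hdist, ← Finset.sum_range_reflect]
  have hre : ∀ k ∈ Finset.range (j.1+1),
      r^(i.1-(j.1+1-1-k)) * r^(j.1-(j.1+1-1-k)) = r^(i.1-j.1) * (r^2)^k := by
    intro k hk
    simp only [Finset.mem_range] at hk
    rw [← pow_mul, ← pow_add, ← pow_add]
    congr 1
    omega
  rw [Finset.sum_congr rfl hre, ← Finset.mul_sum]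
  have hgeo : (1 - r^2) * ∑ k ∈ Finset.range (j.1+1), (r^2)^k = 1 - (r^2)^(j.1+1) := by
    have := geom_sum_mul (r^2) (j.1+1)
    linarith [this]
  have h2 : r^2 * (r^i.1 * r^j.1) = r^(i.1-j.1) * (r^2)^(j.1+1) := by
    rw [← pow_mul, ← pow_add, ← pow_add, ← pow_add]
    congr 1; omega
  rw [h2]
  linear_combination (-(r ^ (i.1 - j.1))) * hgeo

lemma my_kernel_psd (n : ℕ) (x : Fin (n+1) → ℝ) {r : ℝ} (h0 : 0 ≤ r) (h1 : r ≤ 1) :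
    0 ≤ ∑ i : Fin (n+1), ∑ j : Fin (n+1), x i * x j * r ^ (Nat.dist i.1 j.1) := by
  set w : ℕ → Fin (n+1) → ℝ := fun k i => if k ≤ i.1 then r^(i.1-k) else 0 with hw
  have step : ∀ i j : Fin (n+1), x i * x j * r ^ (Nat.dist i.1 j.1)
      = (1 - r^2) * (∑ k ∈ Finset.range (n+1), (x i * w k i) * (x j * w k j))
        + r^2 * ((x i * r^i.1) * (x j * r^j.1)) := by
    intro i j
    have hs : ∑ k ∈ Finset.range (n+1), (x i * w k i) * (x j * w k j)
        = x i * x j * ∑ k ∈ Finset.range (n+1), w k i * w k j := by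
      rw [Finset.mul_sum]
      exact Finset.sum_congr rfl fun k _ => by ring
    rw [hs, my_pair_id n i j]
    ring
  have key : ∑ i : Fin (n+1), ∑ j : Fin (n+1), x i * x j * r ^ (Nat.dist i.1 j.1)
      = (1 - r^2) * ∑ k ∈ Finset.range (n+1), (∑ i : Fin (n+1), x i * w k i)^2
        + r^2 * (∑ i : Fin (n+1), x i * r^i.1)^2 := by
    have hsq : ∀ k, (∑ i : Fin (n+1), x i * w k i)^2
        = ∑ i : Fin (n+1), ∑ j : Fin (n+1), (x i * w k i) * (x j * w k j) := by
      intro k; rw [sq, Finset.sum_mul_sum]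
    have hsq2 : (∑ i : Fin (n+1), x i * r^i.1)^2
        = ∑ i : Fin (n+1), ∑ j : Fin (n+1), (x i * r^i.1) * (x j * r^j.1) := by
      rw [sq, Finset.sum_mul_sum]
    calc ∑ i : Fin (n+1), ∑ j : Fin (n+1), x i * x j * r ^ (Nat.dist i.1 j.1)
        = ∑ i : Fin (n+1), ∑ j : Fin (n+1),
            ((1 - r^2) * (∑ k ∈ Finset.range (n+1), (x i * w k i) * (x j * w k j))
              + r^2 * ((x i * r^i.1) * (x j * r^j.1))) :=
          Finset.sum_congr rfl fun i _ => Finset.sum_congr rfl fun j _ => step i j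
      _ = (1 - r^2) * (∑ i : Fin (n+1), ∑ j : Fin (n+1), ∑ k ∈ Finset.range (n+1),
              (x i * w k i) * (x j * w k j))
            + r^2 * (∑ i : Fin (n+1), ∑ j : Fin (n+1), (x i * r^i.1) * (x j * r^j.1)) := by
          simp only [Finset.sum_add_distrib, ← Finset.mul_sum]
      _ = (1 - r^2) * (∑ k ∈ Finset.range (n+1), ∑ i : Fin (n+1), ∑ j : Fin (n+1),
              (x i * w k i) * (x j * w k j))
            + r^2 * (∑ i : Fin (n+1), ∑ j : Fin (n+1), (x i * r^i.1) * (x j * r^j.1)) := by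
          congr 1
          congr 1
          calc ∑ i : Fin (n+1), ∑ j : Fin (n+1), ∑ k ∈ Finset.range (n+1),
                  (x i * w k i) * (x j * w k j)
              = ∑ i : Fin (n+1), ∑ k ∈ Finset.range (n+1), ∑ j : Fin (n+1),
                  (x i * w k i) * (x j * w k j) :=
                Finset.sum_congr rfl fun i _ => Finset.sum_comm
            _ = ∑ k ∈ Finset.range (n+1), ∑ i : Fin (n+1), ∑ j : Fin (n+1),
                  (x i * w k i) * (x j * w k j) := Finset.sum_comm
      _ = (1 - r^2) * ∑ k ∈ Finset.range (n+1), (∑ i : Fin (n+1), x i * w k i)^2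
            + r^2 * (∑ i : Fin (n+1), x i * r^i.1)^2 := by
          rw [hsq2]
          congr 1
          congr 1
          exact Finset.sum_congr rfl fun k _ => (hsq k).symm
  rw [key]
  have h2 : (0:ℝ) ≤ 1 - r^2 := by nlinarith
  positivity
lemma my_part1 (H : ℝ → ℝ) (hInt : IntegrableOn H (Ici 0))
    {ε C : ℝ} (hε : 0 < ε) (hC : ∀ t ∈ Ioo (0:ℝ) ε, |(H t - H 0)/t| ≤ C)
    (s : ℝ) (hs : 0 ≤ s) :
    IntegrableOn
      (fun t => H 0 * Real.exp (-t) / t - H t * Real.exp (-(s*t)) / (1 - Real.exp (-t)))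
      (Ioc 0 (1/2)) := by
  set ε' : ℝ := min ε (1/2) with hε'def
  have hε'pos : 0 < ε' := lt_min hε (by norm_num)
  have hε'le : ε' ≤ 1/2 := min_le_right _ _
  set C' : ℝ := max C 0 with hC'def
  have hC'0 : 0 ≤ C' := le_max_right _ _
  have hH' : AEStronglyMeasurable H (volume.restrict (Ioc (0:ℝ) (1/2))) :=
    hInt.aestronglyMeasurable.mono_measure
      (Measure.restrict_mono (fun x hx => Set.mem_Ici.2 hx.1.le) le_rfl)
  set φ : ℝ → ℝ := fun t =>
    H 0 * ((Real.exp (-t)/t - 1/(1-Real.exp (-t))) + (1-Real.exp (-(s*t)))/(1-Real.exp (-t)))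
      + (H 0 - H t) * (Real.exp (-(s*t))/(1-Real.exp (-t))) with hφdef
  have hφint : IntegrableOn φ (Ioc 0 (1/2)) := by
    have hdom : IntegrableOn
        (fun t => |H 0| * (16 + 4*s) + (4*C' + (4/ε') * (|H 0| + |H t|))) (Ioc 0 (1/2)) := by
      apply Integrable.add
      · exact integrableOn_const measure_Ioc_lt_top.ne
      · apply Integrable.add
        · exact integrableOn_const measure_Ioc_lt_top.ne
        · apply Integrable.const_mul
          apply Integrable.add
          · exact integrableOn_const measure_Ioc_lt_top.ne
          · exact (hInt.mono_set (fun x hx => Set.mem_Ici.2 hx.1.le)).abs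
    apply Integrable.mono hdom
    · have m3 : Measurable fun t : ℝ =>
          (Real.exp (-t)/t - 1/(1-Real.exp (-t))) + (1-Real.exp (-(s*t)))/(1-Real.exp (-t)) := by
        apply Measurable.add
        · exact ((Real.measurable_exp.comp measurable_neg).div measurable_id).sub
            (measurable_const.div (measurable_const.sub (Real.measurable_exp.comp measurable_neg)))
        · exact (measurable_const.sub (Real.measurable_exp.comp
            (measurable_const.mul measurable_id).neg)).div
            (measurable_const.sub (Real.measurable_exp.comp measurable_neg))
      have m2 : Measurable fun t : ℝ => Real.exp (-(s*t)) / (1 - Real.exp (-t)) :=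
        (Real.measurable_exp.comp (measurable_const.mul measurable_id).neg).div
          (measurable_const.sub (Real.measurable_exp.comp measurable_neg))
      apply AEStronglyMeasurable.add
      · exact (m3.const_mul (H 0)).aestronglyMeasurable
      · exact ((aestronglyMeasurable_const.sub hH').mul m2.aestronglyMeasurable).congr
          (Filter.Eventually.of_forall fun t => rfl)
    · rw [ae_restrict_iff' measurableSet_Ioc]
      filter_upwards with t ht
      rcases ht with ⟨ht0, ht12⟩
      have hden : t/4 ≤ 1 - Real.exp (-t) := my_one_sub_exp_lb ht0 (by linarith)
      have hDpos : (0:ℝ) < 1 - Real.exp (-t) := by nlinarith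
      have hst : Real.exp (-(s*t)) ≤ 1 := by
        rw [Real.exp_le_one_iff]
        exact neg_nonpos.2 (mul_nonneg hs ht0.le)
      have hstpos : (0:ℝ) < Real.exp (-(s*t)) := Real.exp_pos _
      have hα : |Real.exp (-t)/t - 1/(1-Real.exp (-t))| ≤ 16 := by
        have hrw : Real.exp (-t)/t - 1/(1-Real.exp (-t))
            = (Real.exp (-t) - Real.exp (-t)*Real.exp (-t) - t) / (t * (1-Real.exp (-t))) := by
          field_simp
        rw [hrw, abs_div, abs_of_pos (by positivity : (0:ℝ) < t * (1-Real.exp (-t)))]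
        have hnum := my_num_bound ht0.le ht12
        have hd2 : t^2/4 ≤ t * (1-Real.exp (-t)) := by nlinarith
        calc |Real.exp (-t) - Real.exp (-t)*Real.exp (-t) - t| / (t * (1-Real.exp (-t)))
            ≤ (4*t^2) / (t^2/4) := by
              apply div_le_div₀ (by positivity) hnum (by positivity) hd2
          _ = 16 := by field_simp; ring
      have hβ0 : 0 ≤ (1-Real.exp (-(s*t)))/(1-Real.exp (-t)) := by
        apply div_nonneg _ hDpos.le
        linarith
      have hβ : (1-Real.exp (-(s*t)))/(1-Real.exp (-t)) ≤ 4*s := by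
        have hub : 1 - Real.exp (-(s*t)) ≤ s*t := my_one_sub_exp_ub (s*t)
        rw [div_le_iff₀ hDpos]
        nlinarith
      have hq : Real.exp (-(s*t))/(1-Real.exp (-t)) ≤ 4/t := by
        rw [div_le_div_iff₀ hDpos ht0]
        nlinarith
      have hqpos : 0 < Real.exp (-(s*t))/(1-Real.exp (-t)) := by positivity
      have hg : |(H 0 - H t) * (Real.exp (-(s*t))/(1-Real.exp (-t)))|
          ≤ 4*C' + (4/ε') * (|H 0| + |H t|) := by
        rw [abs_mul, abs_of_pos hqpos]
        rcases lt_or_ge t ε' with hcase | hcase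
        · have hCb := hC t ⟨ht0, lt_of_lt_of_le hcase (min_le_left _ _)⟩
          rw [abs_div, abs_of_pos ht0, div_le_iff₀ ht0] at hCb
          have h1 : |H 0 - H t| ≤ C' * t := by
            rw [abs_sub_comm]
            calc |H t - H 0| ≤ C * t := hCb
              _ ≤ C' * t := mul_le_mul_of_nonneg_right (le_max_left _ _) ht0.le
          have h2 : |H 0 - H t| * (Real.exp (-(s*t))/(1-Real.exp (-t))) ≤ C' * t * (4/t) :=
            mul_le_mul h1 hq hqpos.le (by positivity)
          have h3 : C' * t * (4/t) = 4*C' := by field_simp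
          rw [h3] at h2
          have h4 : 0 ≤ (4/ε') * (|H 0| + |H t|) := by positivity
          linarith
        · have hq2 : Real.exp (-(s*t))/(1-Real.exp (-t)) ≤ 4/ε' := by
            calc Real.exp (-(s*t))/(1-Real.exp (-t)) ≤ 4/t := hq
              _ ≤ 4/ε' := div_le_div_of_nonneg_left (by norm_num) hε'pos hcase
          have h1 : |H 0 - H t| ≤ |H 0| + |H t| := abs_sub _ _
          have h2 := mul_le_mul h1 hq2 hqpos.le (by positivity)
          have h4 : 0 ≤ 4*C' := by positivity
          calc |H 0 - H t| * (Real.exp (-(s*t))/(1-Real.exp (-t)))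
              ≤ (|H 0| + |H t|) * (4/ε') := h2
            _ = (4/ε') * (|H 0| + |H t|) := by ring
            _ ≤ 4*C' + (4/ε') * (|H 0| + |H t|) := by linarith
      rw [Real.norm_eq_abs, Real.norm_eq_abs]
      have hrhs : 0 ≤ |H 0| * (16 + 4*s) + (4*C' + (4/ε') * (|H 0| + |H t|)) := by positivity
      rw [abs_of_nonneg hrhs]
      calc |φ t| ≤ |H 0 * ((Real.exp (-t)/t - 1/(1-Real.exp (-t)))
              + (1-Real.exp (-(s*t)))/(1-Real.exp (-t)))|
            + |(H 0 - H t) * (Real.exp (-(s*t))/(1-Real.exp (-t)))| := abs_add_le _ _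
        _ ≤ |H 0| * (16 + 4*s) + (4*C' + (4/ε') * (|H 0| + |H t|)) := by
            apply add_le_add ?_ hg
            rw [abs_mul]
            apply mul_le_mul_of_nonneg_left ?_ (abs_nonneg _)
            calc |(Real.exp (-t)/t - 1/(1-Real.exp (-t)))
                  + (1-Real.exp (-(s*t)))/(1-Real.exp (-t))|
                ≤ |Real.exp (-t)/t - 1/(1-Real.exp (-t))|
                  + |(1-Real.exp (-(s*t)))/(1-Real.exp (-t))| := abs_add_le _ _
              _ ≤ 16 + 4*s := by
                  apply add_le_add hα
                  rw [abs_of_nonneg hβ0]; exact hβ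
  apply hφint.congr_fun ?_ measurableSet_Ioc
  intro t ht
  rcases ht with ⟨ht0, ht12⟩
  have hden : t/4 ≤ 1 - Real.exp (-t) := my_one_sub_exp_lb ht0 (by linarith)
  have hDpos : (0:ℝ) < 1 - Real.exp (-t) := by nlinarith
  rw [hφdef]
  field_simp
  ring
lemma my_part2 (H : ℝ → ℝ) (hInt : IntegrableOn H (Ici 0)) (s : ℝ) (hs : 0 ≤ s) :
    IntegrableOn
      (fun t => H 0 * Real.exp (-t) / t - H t * Real.exp (-(s*t)) / (1 - Real.exp (-t)))
      (Ioi (1/2)) := by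
  apply Integrable.sub
  · have hdom : IntegrableOn (fun t => |H 0| * (2 * Real.exp (-1*t))) (Ioi (1/2)) :=
      ((exp_neg_integrableOn_Ioi (1/2) one_pos).const_mul 2).const_mul |H 0|
    apply Integrable.mono hdom
    · exact ((measurable_const.mul (Real.measurable_exp.comp measurable_neg)).div
        measurable_id).aestronglyMeasurable
    · rw [ae_restrict_iff' measurableSet_Ioi]
      filter_upwards with t ht
      simp only [Set.mem_Ioi] at ht
      have ht0 : 0 < t := by linarith
      have he : (0:ℝ) < Real.exp (-t) := Real.exp_pos _
      rw [Real.norm_eq_abs, Real.norm_eq_abs, abs_mul, abs_mul, abs_div, abs_mul]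
      rw [abs_of_pos he, abs_of_pos ht0, abs_of_pos (by positivity : (0:ℝ) < 2),
        abs_of_pos (Real.exp_pos _), abs_abs]
      have h1 : Real.exp (-t) / t ≤ 2 * Real.exp (-t) := by
        rw [div_le_iff₀ ht0]
        nlinarith [he]
      have h2 : Real.exp (-1*t) = Real.exp (-t) := by norm_num
      rw [h2]
      calc |H 0| * Real.exp (-t) / t = |H 0| * (Real.exp (-t) / t) := by ring
        _ ≤ |H 0| * (2 * Real.exp (-t)) := by
            apply mul_le_mul_of_nonneg_left h1 (abs_nonneg _)
  · have hdom : IntegrableOn (fun t => 8 * H t) (Ioi (1/2)) :=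
      (hInt.mono_set (fun x hx => Set.mem_Ici.2 (le_trans (by norm_num : (0:ℝ) ≤ 1/2) (Set.mem_Ioi.1 hx).le))).const_mul 8
    apply Integrable.mono hdom
    · have hH2 : AEStronglyMeasurable H (volume.restrict (Ioi (1/2:ℝ))) :=
        hInt.aestronglyMeasurable.mono_measure
          (Measure.restrict_mono (fun x hx => Set.mem_Ici.2 (le_trans (by norm_num : (0:ℝ) ≤ 1/2) (Set.mem_Ioi.1 hx).le)) le_rfl)
      have m2 : Measurable fun t : ℝ => Real.exp (-(s*t)) / (1 - Real.exp (-t)) :=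
        (Real.measurable_exp.comp (measurable_const.mul measurable_id).neg).div
          (measurable_const.sub (Real.measurable_exp.comp measurable_neg))
      exact (hH2.mul m2.aestronglyMeasurable).congr
        (by filter_upwards with t using by simp [Pi.mul_apply]; ring)
    · rw [ae_restrict_iff' measurableSet_Ioi]
      filter_upwards with t ht
      simp only [Set.mem_Ioi] at ht
      have hD : (1:ℝ)/8 ≤ 1 - Real.exp (-t) := my_one_sub_exp_lb' ht.le
      have hDpos : (0:ℝ) < 1 - Real.exp (-t) := by linarith
      have hst : Real.exp (-(s*t)) ≤ 1 := by
        rw [Real.exp_le_one_iff]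
        exact neg_nonpos.2 (mul_nonneg hs (by linarith))
      rw [Real.norm_eq_abs, Real.norm_eq_abs, abs_mul, abs_of_pos (by norm_num : (0:ℝ) < 8),
        abs_div, abs_mul, abs_of_pos (Real.exp_pos _), abs_of_pos hDpos]
      calc |H t| * Real.exp (-(s*t)) / (1 - Real.exp (-t))
          = |H t| * (Real.exp (-(s*t)) / (1 - Real.exp (-t))) := by ring
        _ ≤ |H t| * 8 := by
            apply mul_le_mul_of_nonneg_left ?_ (abs_nonneg _)
            rw [div_le_iff₀ hDpos]; nlinarith
        _ = 8 * |H t| := by ring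

lemma my_F_integrable (H : ℝ → ℝ) (hInt : IntegrableOn H (Ici 0))
    (hbd : ∃ ε > (0:ℝ), ∃ C : ℝ, ∀ t ∈ Ioo (0:ℝ) ε, |(H t - H 0)/t| ≤ C)
    (s : ℝ) (hs : 0 ≤ s) :
    IntegrableOn
      (fun t => H 0 * Real.exp (-t) / t - H t * Real.exp (-(s*t)) / (1 - Real.exp (-t)))
      (Ioi 0) := by
  obtain ⟨ε, hε, C, hC⟩ := hbd
  rw [← Ioc_union_Ioi_eq_Ioi (by norm_num : (0:ℝ) ≤ 1/2), integrableOn_union]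
  exact ⟨my_part1 H hInt hε hC s hs, my_part2 H hInt s hs⟩

lemma my_abs_cast_dist (a b : ℕ) : |(a:ℝ) - (b:ℝ)| = (Nat.dist a b : ℝ) := by
  rcases le_total a b with h | h
  · rw [Nat.dist_eq_sub_of_le h, abs_of_nonpos (by linarith [(Nat.cast_le (α := ℝ)).2 h])]
    push_cast [h]
    ring
  · rw [Nat.dist_eq_sub_of_le_right h, abs_of_nonneg (by linarith [(Nat.cast_le (α := ℝ)).2 h])]
    push_cast [h]
    ring

lemma my_exp_dist (a b : ℕ) (t : ℝ) :
    Real.exp (-(|(a:ℝ) - (b:ℝ)| * t)) = (Real.exp (-t)) ^ (Nat.dist a b) := by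
  rw [my_abs_cast_dist, ← Real.exp_nat_mul]
  congr 1
  ring

section TwoFunctions

variable (H₁ H₂ : ℝ → ℝ)
    (hInt₁ : IntegrableOn H₁ (Ici 0)) (hInt₂ : IntegrableOn H₂ (Ici 0))
    (hbd₁ : ∃ ε > (0 : ℝ), ∃ C : ℝ, ∀ t ∈ Ioo (0 : ℝ) ε, |(H₁ t - H₁ 0) / t| ≤ C)
    (hbd₂ : ∃ ε > (0 : ℝ), ∃ C : ℝ, ∀ t ∈ Ioo (0 : ℝ) ε, |(H₂ t - H₂ 0) / t| ≤ C)
    (h0 : H₁ 0 = H₂ 0)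

include hInt₁ hInt₂ hbd₁ hbd₂ h0 in
lemma my_G_integrable (s : ℝ) (hs : 0 ≤ s) :
    IntegrableOn (fun t => (H₂ t - H₁ t) * (Real.exp (-(s*t)) / (1 - Real.exp (-t)))) (Ioi 0) := by
  have h1 := my_F_integrable H₁ hInt₁ hbd₁ s hs
  have h2 := my_F_integrable H₂ hInt₂ hbd₂ s hs
  have heq : ((fun t => (H₁ 0 * Real.exp (-t) / t - H₁ t * Real.exp (-(s*t)) / (1 - Real.exp (-t))))
      - (fun t => (H₂ 0 * Real.exp (-t) / t - H₂ t * Real.exp (-(s*t)) / (1 - Real.exp (-t)))))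
      = fun t => (H₂ t - H₁ t) * (Real.exp (-(s*t)) / (1 - Real.exp (-t))) := by
    funext t
    simp only [Pi.sub_apply]
    rw [h0]
    ring
  have h3 := h1.sub h2
  rwa [heq] at h3

include hInt₁ hInt₂ hbd₁ hbd₂ h0 in
lemma my_psi_sub (s : ℝ) (hs : 0 ≤ s) :
    psiH H₁ s - psiH H₂ s
      = ∫ t in Ioi (0:ℝ), (H₂ t - H₁ t) * (Real.exp (-(s*t)) / (1 - Real.exp (-t))) := by
  unfold psiH
  rw [← integral_sub (my_F_integrable H₁ hInt₁ hbd₁ s hs) (my_F_integrable H₂ hInt₂ hbd₂ s hs)]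
  apply integral_congr_ae
  filter_upwards with t
  rw [h0]
  ring

include hInt₁ hInt₂ hbd₁ hbd₂ h0 in
lemma my_q_le (hle : ∀ t, 0 ≤ t → H₁ t ≤ H₂ t) (n : ℕ) (x : Fin (n + 1) → ℝ) :
    qH H₂ n x ≤ qH H₁ n x := by
  have hGint' : ∀ i j : Fin (n+1), Integrable
      (fun t => x i * x j * ((H₂ t - H₁ t) *
        (Real.exp (-(|(i.1:ℝ) - (j.1:ℝ)| * t)) / (1 - Real.exp (-t)))))
      (volume.restrict (Ioi 0)) := fun i j =>
    (my_G_integrable H₁ H₂ hInt₁ hInt₂ hbd₁ hbd₂ h0 _ (abs_nonneg _)).const_mul _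
  have key : qH H₁ n x - qH H₂ n x
      = ∫ t in Ioi (0:ℝ), ∑ i : Fin (n+1), ∑ j : Fin (n+1),
          x i * x j * ((H₂ t - H₁ t) *
            (Real.exp (-(|(i.1:ℝ) - (j.1:ℝ)| * t)) / (1 - Real.exp (-t)))) := by
    have h1 : qH H₁ n x - qH H₂ n x
        = ∑ i : Fin (n+1), ∑ j : Fin (n+1), x i * x j *
            (psiH H₁ |(i.1:ℝ) - (j.1:ℝ)| - psiH H₂ |(i.1:ℝ) - (j.1:ℝ)|) := by
      unfold qH bH
      rw [← Finset.sum_sub_distrib]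
      apply Finset.sum_congr rfl; intro i _
      rw [← Finset.sum_sub_distrib]
      apply Finset.sum_congr rfl; intro j _
      ring
    rw [h1, integral_finset_sum univ (fun i _ => integrable_finset_sum univ (fun j _ => hGint' i j))]
    apply Finset.sum_congr rfl; intro i _
    rw [integral_finset_sum univ (fun j _ => hGint' i j)]
    apply Finset.sum_congr rfl; intro j _
    rw [my_psi_sub H₁ H₂ hInt₁ hInt₂ hbd₁ hbd₂ h0 _ (abs_nonneg _), ← integral_const_mul]
  have hnon : 0 ≤ ∫ t in Ioi (0:ℝ), ∑ i : Fin (n+1), ∑ j : Fin (n+1),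
      x i * x j * ((H₂ t - H₁ t) *
        (Real.exp (-(|(i.1:ℝ) - (j.1:ℝ)| * t)) / (1 - Real.exp (-t)))) := by
    apply setIntegral_nonneg measurableSet_Ioi
    intro t ht
    rw [Set.mem_Ioi] at ht
    have hr1 : Real.exp (-t) ≤ 1 := by
      rw [Real.exp_le_one_iff]; linarith
    have hD : Real.exp (-t) < 1 := by
      have h := Real.exp_lt_exp.2 (show -t < 0 by linarith)
      rwa [Real.exp_zero] at h
    have hDpos : (0:ℝ) < 1 - Real.exp (-t) := by linarith
    have hfac : ∑ i : Fin (n+1), ∑ j : Fin (n+1),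
        x i * x j * ((H₂ t - H₁ t) *
          (Real.exp (-(|(i.1:ℝ) - (j.1:ℝ)| * t)) / (1 - Real.exp (-t))))
        = ((H₂ t - H₁ t) / (1 - Real.exp (-t))) *
          ∑ i : Fin (n+1), ∑ j : Fin (n+1),
            x i * x j * (Real.exp (-t)) ^ (Nat.dist i.1 j.1) := by
      rw [Finset.mul_sum]
      apply Finset.sum_congr rfl; intro i _
      rw [Finset.mul_sum]
      apply Finset.sum_congr rfl; intro j _
      rw [my_exp_dist i.1 j.1 t]
      ring
    rw [hfac]
    exact mul_nonneg (div_nonneg (by linarith [hle t ht.le]) hDpos.le)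
      (my_kernel_psd n x (Real.exp_pos _).le hr1)
  linarith [key ▸ hnon]

end TwoFunctions

lemma my_q_nonpos (H : ℝ → ℝ) (hInt : IntegrableOn H (Ici 0))
    (hbd : ∃ ε > (0:ℝ), ∃ C : ℝ, ∀ t ∈ Ioo (0:ℝ) ε, |(H t - H 0)/t| ≤ C)
    (hpos : ∀ t, 0 ≤ t → 0 ≤ H t)
    (n : ℕ) (y : Fin (n + 1) → ℝ) (hy : ∑ i, y i = 0) : qH H n y ≤ 0 := by
  have hFint : ∀ i j : Fin (n+1), Integrable
      (fun t => y i * y j * (H 0 * Real.exp (-t) / t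
        - H t * Real.exp (-(|(i.1:ℝ) - (j.1:ℝ)| * t)) / (1 - Real.exp (-t))))
      (volume.restrict (Ioi 0)) := fun i j =>
    (my_F_integrable H hInt hbd _ (abs_nonneg _)).const_mul _
  have key : qH H n y = ∫ t in Ioi (0:ℝ), ∑ i : Fin (n+1), ∑ j : Fin (n+1),
      y i * y j * (H 0 * Real.exp (-t) / t
        - H t * Real.exp (-(|(i.1:ℝ) - (j.1:ℝ)| * t)) / (1 - Real.exp (-t))) := by
    unfold qH bH psiH
    rw [integral_finset_sum univ (fun i _ => integrable_finset_sum univ (fun j _ => hFint i j))]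
    apply Finset.sum_congr rfl; intro i _
    rw [integral_finset_sum univ (fun j _ => hFint i j)]
    apply Finset.sum_congr rfl; intro j _
    rw [← integral_const_mul]
  rw [key]
  apply setIntegral_nonpos measurableSet_Ioi
  intro t ht
  rw [Set.mem_Ioi] at ht
  have hr1 : Real.exp (-t) ≤ 1 := by
    rw [Real.exp_le_one_iff]; linarith
  have hD : Real.exp (-t) < 1 := by
    have h := Real.exp_lt_exp.2 (show -t < 0 by linarith)
    rwa [Real.exp_zero] at h
  have hDpos : (0:ℝ) < 1 - Real.exp (-t) := by linarith
  have e1 : ∀ i j : Fin (n+1), y i * y j * (H 0 * Real.exp (-t) / t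
      - H t * Real.exp (-(|(i.1:ℝ) - (j.1:ℝ)| * t)) / (1 - Real.exp (-t)))
      = y i * y j * (H 0 * Real.exp (-t) / t)
        - (H t / (1 - Real.exp (-t))) * (y i * y j * (Real.exp (-t)) ^ (Nat.dist i.1 j.1)) := by
    intro i j
    rw [← my_exp_dist i.1 j.1 t]
    ring
  calc ∑ i : Fin (n+1), ∑ j : Fin (n+1), y i * y j * (H 0 * Real.exp (-t) / t
        - H t * Real.exp (-(|(i.1:ℝ) - (j.1:ℝ)| * t)) / (1 - Real.exp (-t)))
      = (∑ i : Fin (n+1), ∑ j : Fin (n+1), y i * y j * (H 0 * Real.exp (-t) / t))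
        - (H t / (1 - Real.exp (-t))) *
          (∑ i : Fin (n+1), ∑ j : Fin (n+1), y i * y j * (Real.exp (-t)) ^ (Nat.dist i.1 j.1)) := by
        rw [Finset.mul_sum, ← Finset.sum_sub_distrib]
        apply Finset.sum_congr rfl; intro i _
        rw [Finset.mul_sum, ← Finset.sum_sub_distrib]
        apply Finset.sum_congr rfl; intro j _
        exact e1 i j
    _ = 0 - (H t / (1 - Real.exp (-t))) *
          (∑ i : Fin (n+1), ∑ j : Fin (n+1), y i * y j * (Real.exp (-t)) ^ (Nat.dist i.1 j.1)) := by
        congr 1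
        have : ∑ i : Fin (n+1), ∑ j : Fin (n+1), y i * y j * (H 0 * Real.exp (-t) / t)
            = ((∑ i : Fin (n+1), y i) * (∑ j : Fin (n+1), y j)) * (H 0 * Real.exp (-t) / t) := by
          rw [Finset.sum_mul_sum, Finset.sum_mul]
          apply Finset.sum_congr rfl; intro i _
          rw [Finset.sum_mul]
        rw [this, hy]
        ring
    _ ≤ 0 := by
        rw [zero_sub, neg_nonpos]
        exact mul_nonneg (div_nonneg (hpos t ht.le) hDpos.le)
          (my_kernel_psd n y (Real.exp_pos _).le hr1)

lemma my_bH_symm (H : ℝ → ℝ) (n : ℕ) (x y : Fin (n + 1) → ℝ) : bH H n x y = bH H n y x := by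
  unfold bH
  rw [Finset.sum_comm]
  apply Finset.sum_congr rfl; intro i _
  apply Finset.sum_congr rfl; intro j _
  rw [abs_sub_comm]
  ring

lemma my_qH_expand (H : ℝ → ℝ) (n : ℕ) (x d : Fin (n + 1) → ℝ) :
    qH H n (fun i => x i + d i) = qH H n x + 2 * bH H n x d + qH H n d := by
  have hsymm := my_bH_symm H n d x
  unfold qH bH at *
  calc ∑ i : Fin (n+1), ∑ j : Fin (n+1),
        (x i + d i) * (x j + d j) * psiH H |(i.1:ℝ) - (j.1:ℝ)|
      = ∑ i : Fin (n+1), ∑ j : Fin (n+1),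
          (x i * x j * psiH H |(i.1:ℝ) - (j.1:ℝ)|
            + (x i * d j * psiH H |(i.1:ℝ) - (j.1:ℝ)|
              + (d i * x j * psiH H |(i.1:ℝ) - (j.1:ℝ)|
                + d i * d j * psiH H |(i.1:ℝ) - (j.1:ℝ)|))) := by
        apply Finset.sum_congr rfl; intro i _
        apply Finset.sum_congr rfl; intro j _
        ring
    _ = (∑ i : Fin (n+1), ∑ j : Fin (n+1), x i * x j * psiH H |(i.1:ℝ) - (j.1:ℝ)|)
        + ((∑ i : Fin (n+1), ∑ j : Fin (n+1), x i * d j * psiH H |(i.1:ℝ) - (j.1:ℝ)|)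
          + ((∑ i : Fin (n+1), ∑ j : Fin (n+1), d i * x j * psiH H |(i.1:ℝ) - (j.1:ℝ)|)
            + (∑ i : Fin (n+1), ∑ j : Fin (n+1), d i * d j * psiH H |(i.1:ℝ) - (j.1:ℝ)|))) := by
        simp only [Finset.sum_add_distrib]
    _ = _ := by
        rw [hsymm]
        ring

theorem stmt_12 (H₁ H₂ : ℝ → ℝ)
    (hInt₁ : IntegrableOn H₁ (Ici 0)) (hInt₂ : IntegrableOn H₂ (Ici 0))
    (hbd₁ : ∃ ε > (0 : ℝ), ∃ C : ℝ, ∀ t ∈ Ioo (0 : ℝ) ε, |(H₁ t - H₁ 0) / t| ≤ C)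
    (hbd₂ : ∃ ε > (0 : ℝ), ∃ C : ℝ, ∀ t ∈ Ioo (0 : ℝ) ε, |(H₂ t - H₂ 0) / t| ≤ C)
    (hle : ∀ t, 0 ≤ t → H₁ t ≤ H₂ t) (h0 : H₁ 0 = H₂ 0) :
    (∀ n : ℕ, ∀ x : Fin (n + 1) → ℝ, qH H₂ n x ≤ qH H₁ n x) ∧
    ((∀ t, 0 ≤ t → 0 ≤ H₁ t) → (∀ t, 0 ≤ t → 0 ≤ H₂ t) →
      ¬ (∀ᵐ t ∂(volume.restrict (Ioi (0 : ℝ))), H₁ t = 0) →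
      ¬ (∀ᵐ t ∂(volume.restrict (Ioi (0 : ℝ))), H₂ t = 0) →
      ∀ n : ℕ, ∀ v₁ v₂ : Fin (n + 1) → ℝ,
        (∑ i, v₁ i = 1) → (∀ y : Fin (n + 1) → ℝ, ∑ i, y i = 0 → bH H₁ n v₁ y = 0) →
        (∑ i, v₂ i = 1) → (∀ y : Fin (n + 1) → ℝ, ∑ i, y i = 0 → bH H₂ n v₂ y = 0) →
        qH H₂ n v₂ ≤ qH H₁ n v₁) := by
  have part1 : ∀ n : ℕ, ∀ x : Fin (n + 1) → ℝ, qH H₂ n x ≤ qH H₁ n x :=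
    fun n x => my_q_le H₁ H₂ hInt₁ hInt₂ hbd₁ hbd₂ h0 hle n x
  refine ⟨part1, ?_⟩
  intro h1pos _h2pos _ _ n v₁ v₂ hs1 horth1 hs2 _horth2
  set d : Fin (n+1) → ℝ := fun i => v₂ i - v₁ i with hd
  have hdsum : ∑ i, d i = 0 := by
    simp only [hd, Finset.sum_sub_distrib, hs1, hs2]
    ring
  have hv2 : v₂ = fun i => v₁ i + d i := by
    funext i
    simp [hd]
  have hexp : qH H₁ n v₂ = qH H₁ n v₁ + 2 * bH H₁ n v₁ d + qH H₁ n d := by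
    rw [hv2]
    exact my_qH_expand H₁ n v₁ d
  have hb0 : bH H₁ n v₁ d = 0 := horth1 d hdsum
  have hqd : qH H₁ n d ≤ 0 := my_q_nonpos H₁ hInt₁ hbd₁ h1pos n d hdsum
  have h2 : qH H₂ n v₂ ≤ qH H₁ n v₂ := part1 n v₂
  have h3 : qH H₁ n v₂ ≤ qH H₁ n v₁ := by
    rw [hexp, hb0]
    linarith
  linarith
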